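/- arXiv:2008.09553 — 5 statements merged into one kernel-verified Lean document; each statement's English description precedes it below -/
import Mathlib

section
/- Let $\psi_1, \dots, \psi_n > 0$ with $\mathfrak{s} = \sum_{i=1}^n \psi_i$, so $0 < \psi_i < \mathfrak{s}$ for each $i$. For $i \neq j$ define $\alpha_{ij} = -\sqrt{\psi_i \psi_j / ((\mathfrak{s} - \psi_i)(\mathfrak{s} - \psi_j))}$. Then for any pairwise distinct indices $i, j, k$ one has $\alpha_{ij}\alpha_{ik} - \alpha_{jk} \neq 0$ and $\dfrac{\alpha_{ij}\alpha_{ik}}{\alpha_{ij}\alpha_{ik} - \alpha_{jk}} = \dfrac{\psi_i}{\mathfrak{s}}$. -/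
/-- For positive `ψ` with sum `s` and `αᵢⱼ = -√(ψᵢψⱼ/((s-ψᵢ)(s-ψⱼ)))`, for pairwise
distinct `i,j,k` we have `αᵢⱼαᵢₖ - αⱼₖ ≠ 0` and `αᵢⱼαᵢₖ/(αᵢⱼαᵢₖ - αⱼₖ) = ψᵢ/s`. -/
theorem alpha_ratio_recovers_psi (n : ℕ) (ψ : Fin n → ℝ) (hψ : ∀ i, 0 < ψ i)
    (s : ℝ) (hs : s = ∑ i, ψ i)
    (α : Fin n → Fin n → ℝ)
    (hα : ∀ i j, i ≠ j →
      α i j = -Real.sqrt (ψ i * ψ j / ((s - ψ i) * (s - ψ j)))) :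
    ∀ i j k : Fin n, i ≠ j → i ≠ k → j ≠ k →
      α i j * α i k - α j k ≠ 0 ∧
      α i j * α i k / (α i j * α i k - α j k) = ψ i / s := by
  intro i j k hij hik hjk
  -- each ψ is less than s
  have hlt : ∀ a b : Fin n, a ≠ b → ψ a < s := by
    intro a b hab
    have hsub : ({a, b} : Finset (Fin n)) ⊆ Finset.univ := Finset.subset_univ _
    have hle : ∑ l ∈ ({a, b} : Finset (Fin n)), ψ l ≤ ∑ l, ψ l :=
      Finset.sum_le_sum_of_subset_of_nonneg hsub (fun l _ _ => (hψ l).le)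
    rw [Finset.sum_pair hab] at hle
    have := hψ b
    linarith [hs ▸ hle]
  have hi : 0 < s - ψ i := sub_pos.mpr (hlt i j hij)
  have hj : 0 < s - ψ j := sub_pos.mpr (hlt j i hij.symm)
  have hk : 0 < s - ψ k := sub_pos.mpr (hlt k i hik.symm)
  have hψi := hψ i; have hψj := hψ j; have hψk := hψ k
  have hspos : 0 < s := by linarith
  set z : ℝ := ψ j * ψ k / ((s - ψ j) * (s - ψ k)) with hz
  have hzpos : 0 < z := div_pos (mul_pos hψj hψk) (mul_pos hj hk)
  set t : ℝ := Real.sqrt z with ht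
  have htpos : 0 < t := Real.sqrt_pos.mpr hzpos
  have hprod : α i j * α i k = (ψ i / (s - ψ i)) * t := by
    rw [hα i j hij, hα i k hik, neg_mul_neg, ← Real.sqrt_mul (by positivity)]
    have heq : ψ i * ψ j / ((s - ψ i) * (s - ψ j)) *
        (ψ i * ψ k / ((s - ψ i) * (s - ψ k))) = (ψ i / (s - ψ i)) ^ 2 * z := by
      rw [div_mul_div_comm, hz, div_pow, div_mul_div_comm]; congr 1 <;> ring
    rw [heq, Real.sqrt_mul (by positivity), Real.sqrt_sq (by positivity)]
  have hjk' : α j k = -t := by rw [hα j k hjk, ht, hz]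
  have hden : α i j * α i k - α j k = t * s / (s - ψ i) := by
    rw [hprod, hjk']; field_simp; ring
  constructor
  · rw [hden]; positivity
  · rw [hprod, hjk']
    field_simp
    ring
    exact mul_inv_cancel₀ hspos.ne'
end

section
/- Let $\psi_1, \dots, \psi_n > 0$, $\langle x, y \rangle_\psi = \sum_i \psi_i x_i y_i$, $p = (1,\dots,1)$, and $\mathfrak{g} = \{x \in \mathbb{R}^n : \langle p, x \rangle_\psi = 0\}$. Suppose $v \in \mathfrak{g}$, $v \neq 0$, and every coordinate $v_i$ satisfies the same quadratic equation $v_i^2 = \alpha v_i + \beta$ for fixed reals $\alpha, \beta$. Then the quadratic $t^2 = \alpha t + \beta$ has two distinct real roots $\sigma_+, \sigma_-$ and $\sigma_+ \sigma_- < 0$ (one root is positive and the other negative). -/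
/-- If `v ≠ 0` lies in the hyperplane `⟨p, v⟩_ψ = 0` (with all `ψᵢ > 0`) and all its
coordinates satisfy `vᵢ² = α vᵢ + β`, then this quadratic has two distinct real
roots of opposite signs. -/
theorem critical_point_roots (n : ℕ) (ψ : Fin n → ℝ) (hψ : ∀ i, 0 < ψ i)
    (v : Fin n → ℝ) (hv0 : v ≠ 0) (hvg : ∑ i, ψ i * v i = 0)
    (α β : ℝ) (hquad : ∀ i, v i ^ 2 = α * v i + β) :
    ∃ σp σm : ℝ, σp ≠ σm ∧ σp ^ 2 = α * σp + β ∧ σm ^ 2 = α * σm + β ∧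
      σp * σm < 0 := by
  -- there is a nonzero coordinate
  obtain ⟨k, hk⟩ : ∃ k, v k ≠ 0 := by
    by_contra h
    push_neg at h
    exact hv0 (funext h)
  -- there is a positive coordinate
  have hpos : ∃ i, 0 < v i := by
    by_contra h
    push_neg at h
    have hk' : v k < 0 := lt_of_le_of_ne (h k) hk
    have : (0:ℝ) < -∑ i, ψ i * v i := by
      rw [← Finset.sum_neg_distrib]
      refine Finset.sum_pos' (fun i _ => ?_) ⟨k, Finset.mem_univ k, ?_⟩
      · have := mul_nonpos_of_nonneg_of_nonpos (hψ i).le (h i)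
        linarith
      · have := mul_neg_of_pos_of_neg (hψ k) hk'
        linarith
    rw [hvg] at this; simp at this
  have hneg : ∃ j, v j < 0 := by
    by_contra h
    push_neg at h
    obtain ⟨i, hi⟩ := hpos
    have : (0:ℝ) < ∑ i, ψ i * v i := by
      apply Finset.sum_pos' (fun j _ => mul_nonneg (hψ j).le (h j))
        ⟨i, Finset.mem_univ i, mul_pos (hψ i) hi⟩
    rw [hvg] at this; exact lt_irrefl 0 this
  obtain ⟨i, hi⟩ := hpos
  obtain ⟨j, hj⟩ := hneg
  exact ⟨v i, v j, by linarith, hquad i, hquad j, mul_neg_of_pos_of_neg hi hj⟩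
end

section
/- Let $\lambda \in \mathbb{R}$ and $v \in \mathbb{R}$, and consider the $3 \times 3$ real matrix $A = \begin{pmatrix} 0 & v & 0 \\ 0 & \lambda v & v \\ 0 & 0 & 0 \end{pmatrix}$. If $\lambda \neq 0$, then $\exp(A) = \begin{pmatrix} 1 & f & g \\ 0 & e^{\lambda v} & f \\ 0 & 0 & 1 \end{pmatrix}$, where $f = \lambda^{-1}(e^{\lambda v} - 1)$ and $g = \lambda^{-2}(e^{\lambda v} - 1 - \lambda v)$. -/
set_option maxHeartbeats 1000000

open NormedSpace Matrix

attribute [local instance] Matrix.linftyOpNormedRing Matrix.linftyOpNormedAlgebra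

open NormedSpace in
/-- Matrix exponential of the `3×3` nilpotent-plus-diagonal block appearing in the
translation groups of generalized cusps. -/
theorem exp_cusp_block (lam v : ℝ) (hlam : lam ≠ 0) :
    NormedSpace.exp (!![0, v, 0; 0, lam * v, v; 0, 0, 0] : Matrix (Fin 3) (Fin 3) ℝ) =
      !![1, lam⁻¹ * (Real.exp (lam * v) - 1),
          lam⁻¹ ^ 2 * (Real.exp (lam * v) - 1 - lam * v);
        0, Real.exp (lam * v), lam⁻¹ * (Real.exp (lam * v) - 1);
        0, 0, 1] := by
  set A : Matrix (Fin 3) (Fin 3) ℝ := !![0, v, 0; 0, lam * v, v; 0, 0, 0] with hA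
  by_cases hv : v = 0
  · subst hv
    have : A = 0 := by
      ext i j; fin_cases i <;> fin_cases j <;> simp [hA, Matrix.vecHead, Matrix.vecTail]
    rw [this, NormedSpace.exp_zero]
    ext i j; fin_cases i <;> fin_cases j <;> simp [Matrix.one_apply, Matrix.vecHead, Matrix.vecTail]
  -- v ≠ 0 case
  have hA2 : A ^ 2 = !![0, lam * v ^ 2, v ^ 2; 0, lam ^ 2 * v ^ 2, lam * v ^ 2; 0, 0, 0] := by
    rw [pow_two, hA]
    ext i j
    fin_cases i <;> fin_cases j <;>
      simp [Matrix.mul_apply, Fin.sum_univ_three, Matrix.vecHead, Matrix.vecTail] <;> ring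
  have hA3 : A ^ 2 * A = (lam * v) • A ^ 2 := by
    rw [hA2, hA]
    ext i j
    fin_cases i <;> fin_cases j <;>
      simp [Matrix.mul_apply, Fin.sum_univ_three, Matrix.vecHead, Matrix.vecTail] <;> ring
  have hAn : ∀ n : ℕ, A ^ (n + 2) = (lam * v) ^ n • A ^ 2 := by
    intro n
    induction n with
    | zero => simp
    | succ k ih =>
      have h : A ^ (k + 3) = A ^ (k + 2) * A := by rw [← pow_succ]
      rw [h, ih, Matrix.smul_mul, hA3, smul_smul, ← pow_succ]
  have hx : lam * v ≠ 0 := mul_ne_zero hlam hv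
  -- summability of the scalar exponential series
  have hsum : Summable fun n : ℕ => (lam * v) ^ n / (n.factorial : ℝ) :=
    Real.summable_pow_div_factorial (lam * v)
  have hexp : ∑' n : ℕ, (lam * v) ^ n / (n.factorial : ℝ) = Real.exp (lam * v) := by
    rw [Real.exp_eq_exp_ℝ, NormedSpace.exp_eq_tsum_div]
  -- the matrix exponential series is summable
  have hS : Summable fun n : ℕ => (((n.factorial : ℝ) : ℝ)⁻¹) • A ^ n :=
    NormedSpace.expSeries_summable' (𝕂 := ℝ) A
  have hS1 : Summable fun n : ℕ => (((((n+1).factorial : ℕ)) : ℝ)⁻¹) • A ^ (n + 1) :=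
    (summable_nat_add_iff 1).2 hS
  -- split off the first two terms
  have hsplit : NormedSpace.exp A = 1 + A +
      ∑' n : ℕ, (((((n+2).factorial : ℕ)) : ℝ)⁻¹) • A ^ (n + 2) := by
    simp only [NormedSpace.exp_eq_tsum ℝ]
    rw [Summable.tsum_eq_zero_add hS, Summable.tsum_eq_zero_add hS1]
    simp [add_assoc]
  -- compute the tail sum
  have htail : ∑' n : ℕ, (((((n+2).factorial : ℕ)) : ℝ)⁻¹) • A ^ (n + 2)
      = ((lam * v)⁻¹ ^ 2 * (Real.exp (lam * v) - 1 - lam * v)) • A ^ 2 := by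
    have h1 : ∀ n : ℕ, (((((n+2).factorial : ℕ)) : ℝ)⁻¹) • A ^ (n + 2)
        = ((lam * v) ^ (n + 2) / ((n+2).factorial : ℝ) * (lam * v)⁻¹ ^ 2) • A ^ 2 := by
      intro n
      rw [hAn n, smul_smul]
      congr 1
      field_simp
      ring
    rw [tsum_congr h1]
    have h2 : Summable fun n : ℕ => (lam * v) ^ (n + 2) / (((n+2).factorial : ℕ)) :=
      (summable_nat_add_iff 2).2 hsum
    rw [Summable.tsum_smul_const ?_]
    · congr 1
      rw [tsum_mul_right]
      have h3 : ∑' n : ℕ, (lam * v) ^ (n + 2) / (((n+2).factorial : ℕ))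
          = Real.exp (lam * v) - 1 - lam * v := by
        have := Summable.tsum_eq_zero_add hsum
        have h4 := Summable.tsum_eq_zero_add ((summable_nat_add_iff 1).2 hsum)
        rw [h4] at this
        rw [hexp] at this
        push_cast at this ⊢
        simp only [pow_zero, Nat.factorial_zero, Nat.factorial_one, pow_one] at this
        norm_num at this
        linarith
      rw [h3]
      ring
    · exact h2.mul_right _
  rw [hsplit, htail, hA2]
  ext i j
  fin_cases i <;> fin_cases j <;>
    simp [hA, Matrix.one_apply, Matrix.vecHead, Matrix.vecTail] <;> field_simp <;> ring
end

section
/- Let $A_n = \{\lambda \in \mathbb{R}^n : 0 \leq \lambda_0 \leq \lambda_1 \leq \cdots \leq \lambda_{n-1}\}$ and $\widetilde{A}_n = \{(\lambda, \kappa) \in A_n \times [0,1]^{n-1} : \lambda_0 = \lambda_i \kappa_i \text{ for all } 1 \leq i \leq n-1\}$, with projection $p_1(\lambda, \kappa) = \lambda$. Then: (a) $p_1$ is surjective; (b) if all coordinates of $\lambda$ are positive then $p_1^{-1}(\lambda)$ is a single point; (c) if $\lambda_i = 0$ exactly for $i \leq u$ (with $u \geq 0$, so $\lambda_0 = 0$),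 then $p_1^{-1}(\lambda) = \{\lambda\} \times ([0,1]^u \times \{0\}^{n-1-u})$; in particular every fiber of $p_1$ is compact. -/
/-- The projection `p₁` from the blown-up Weyl chamber `Ã` to the Weyl chamber `A`:
(a) surjective; (b) injective fibers over `λ` with all positive coordinates;
(c) explicit fiber when `λᵢ = 0 ⟺ i ≤ u`; every fiber is compact. -/
theorem blown_up_weyl_fibers (m : ℕ)
    (A : Set (Fin (m + 1) → ℝ))
    (hA : A = {l | 0 ≤ l 0 ∧ Monotone l})
    (At : Set ((Fin (m + 1) → ℝ) × (Fin m → ℝ)))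
    (hAt : At = {p | p.1 ∈ A ∧ (∀ j, p.2 j ∈ Set.Icc (0 : ℝ) 1) ∧
      ∀ j : Fin m, p.1 0 = p.1 j.succ * p.2 j}) :
    (∀ l ∈ A, ∃ κ, (l, κ) ∈ At) ∧
    (∀ l ∈ A, (∀ i, 0 < l i) →
      ∀ κ κ' : Fin m → ℝ, (l, κ) ∈ At → (l, κ') ∈ At → κ = κ') ∧
    (∀ l ∈ A, ∀ u : ℕ, (∀ i : Fin (m + 1), l i = 0 ↔ (i : ℕ) ≤ u) →
      ∀ κ : Fin m → ℝ, ((l, κ) ∈ At ↔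
        ((∀ j, κ j ∈ Set.Icc (0 : ℝ) 1) ∧
          ∀ j : Fin m, u < (j : ℕ) + 1 → κ j = 0))) ∧
    (∀ l : Fin (m + 1) → ℝ, IsCompact {κ : Fin m → ℝ | (l, κ) ∈ At}) := by
  subst hA hAt
  refine ⟨?_, ?_, ?_, ?_⟩
  · rintro l ⟨h0, hmono⟩
    refine ⟨fun j => if l j.succ = 0 then 1 else l 0 / l j.succ, ⟨h0, hmono⟩, ?_, ?_⟩
    · intro j
      by_cases h : l j.succ = 0
      · simp [h]
      · have hle : l 0 ≤ l j.succ := hmono (Fin.zero_le _)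
        have hpos : 0 < l j.succ := lt_of_le_of_ne (h0.trans hle) (Ne.symm h)
        simp only [h, if_false, Set.mem_Icc]
        constructor
        · positivity
        · exact div_le_one_of_le₀ hle hpos.le
    · intro j
      by_cases h : l j.succ = 0
      · have h0' : l 0 = 0 :=
          le_antisymm (by simpa [h] using hmono (Fin.zero_le j.succ)) h0
        simp [h, h0']
      · show l 0 = l j.succ * (if l j.succ = 0 then 1 else l 0 / l j.succ)
        rw [if_neg h, mul_div_assoc', mul_div_cancel_left₀ _ h]
  · rintro l ⟨h0, hmono⟩ hpos κ κ' ⟨_, _, hκ⟩ ⟨_, _, hκ'⟩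
    funext j
    exact mul_left_cancel₀ (hpos j.succ).ne' ((hκ j).symm.trans (hκ' j))
  · rintro l hl u hu κ
    have hl0 : l 0 = 0 := (hu 0).mpr (by simp)
    constructor
    · rintro ⟨_, hIcc, heq⟩
      refine ⟨hIcc, fun j hj => ?_⟩
      have hne : l j.succ ≠ 0 := by
        intro h
        have := (hu j.succ).mp h
        rw [Fin.val_succ] at this
        omega
      have h2 : l j.succ * κ j = l 0 := (heq j).symm
      rw [hl0] at h2
      rcases mul_eq_zero.mp h2 with h | h
      · exact absurd h hne
      · exact h
    · rintro ⟨hIcc, hz⟩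
      refine ⟨hl, hIcc, fun j => ?_⟩
      show l 0 = l j.succ * κ j
      rw [hl0]
      by_cases hj : u < (j : ℕ) + 1
      · rw [hz j hj, mul_zero]
      · have : l j.succ = 0 := (hu j.succ).mpr (by rw [Fin.val_succ]; omega)
        rw [this, zero_mul]
  · intro l
    by_cases hl : (0 ≤ l 0 ∧ Monotone l)
    · have hset : {κ : Fin m → ℝ |
          (0 ≤ l 0 ∧ Monotone l) ∧ (∀ j, κ j ∈ Set.Icc (0 : ℝ) 1) ∧
            ∀ j : Fin m, l 0 = l j.succ * κ j} =
          Set.pi Set.univ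
            (fun j => Set.Icc (0 : ℝ) 1 ∩ {x | l 0 = l j.succ * x}) := by
        ext κ
        simp only [Set.mem_setOf_eq, Set.mem_pi, Set.mem_univ, true_implies,
          Set.mem_inter_iff, Set.mem_Icc]
        constructor
        · rintro ⟨_, h1, h2⟩ j
          exact ⟨h1 j, h2 j⟩
        · intro h
          exact ⟨hl, fun j => (h j).1, fun j => (h j).2⟩
      show IsCompact {κ : Fin m → ℝ | (0 ≤ l 0 ∧ Monotone l) ∧ _}
      rw [hset]
      exact isCompact_univ_pi fun j =>
        isCompact_Icc.inter_right
          (isClosed_eq continuous_const (continuous_const.mul continuous_id))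
    · convert isCompact_empty
      ext κ
      simp only [Set.mem_setOf_eq, Set.mem_empty_iff_false, iff_false]
      rintro ⟨h, -⟩
      exact hl h
end

section
/- Let $\kappa \in \mathbb{R}^m$ with $\kappa \neq 0$, and define $T : \mathbb{R}^m \to \mathbb{R}^m$ by $T(v) = v + \alpha \langle v, \kappa \rangle \kappa$, where $\alpha = \|\kappa\|^{-2}\big(-1 + (1 + \|\kappa\|^2)^{-1/2}\big)$. Then for every $v \in \mathbb{R}^m$, $\|T v\|^2 + \langle T v, \kappa \rangle^2 = \|v\|^2$; that is, $T$ is an isometry from the standard quadratic form to the quadratic form $\beta(w) = \|w\|^2 + \langle w, \kappa \rangle^2$. -/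
/-- The map `T v = v + α ⟨v,κ⟩ κ`, with
`α = ‖κ‖⁻²(-1 + (1+‖κ‖²)^{-1/2})`, is an isometry from the standard quadratic form
to `β(w) = ‖w‖² + ⟨w,κ⟩²`. -/
theorem isometry_to_horosphere_form {m : ℕ} (κ : Fin m → ℝ) (hκ : κ ≠ 0)
    (α : ℝ)
    (hα : α = (∑ i, κ i ^ 2)⁻¹ * (-1 + (Real.sqrt (1 + ∑ i, κ i ^ 2))⁻¹))
    (T : (Fin m → ℝ) → (Fin m → ℝ))
    (hT : ∀ v, T v = v + (α * ∑ i, v i * κ i) • κ) :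
    ∀ v : Fin m → ℝ,
      (∑ i, T v i ^ 2) + (∑ i, T v i * κ i) ^ 2 = ∑ i, v i ^ 2 := by
  intro v
  have hK : (0:ℝ) < ∑ i, κ i ^ 2 := by
    rcases Function.ne_iff.mp hκ with ⟨j, hj⟩
    exact Finset.sum_pos' (fun i _ => sq_nonneg _) ⟨j, Finset.mem_univ j, lt_of_le_of_ne (sq_nonneg _) (Ne.symm (pow_ne_zero 2 hj))⟩
  set K := ∑ i, κ i ^ 2 with hKdef
  set c := ∑ i, v i * κ i with hcdef
  set s := Real.sqrt (1 + K) with hsdef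
  have hs : s ^ 2 = 1 + K := Real.sq_sqrt (by linarith)
  have hs0 : s ≠ 0 := by
    rw [hsdef]
    positivity
  have hTi : ∀ i, T v i = v i + (α * c) * κ i := by
    intro i
    rw [hT]
    simp [hcdef]
  have h1 : ∑ i, T v i ^ 2
      = (∑ i, v i ^ 2) + 2 * (α * c) * c + (α * c) ^ 2 * K := by
    have : ∑ i, T v i ^ 2
        = ∑ i, (v i ^ 2 + 2 * (α * c) * (v i * κ i) + (α * c) ^ 2 * κ i ^ 2) := by
      refine Finset.sum_congr rfl fun i _ => ?_
      rw [hTi i]; ring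
    rw [this, Finset.sum_add_distrib, Finset.sum_add_distrib, ← Finset.mul_sum,
      ← Finset.mul_sum, ← hcdef, ← hKdef]
  have h2 : ∑ i, T v i * κ i = c + (α * c) * K := by
    have : ∑ i, T v i * κ i
        = ∑ i, (v i * κ i + (α * c) * κ i ^ 2) := by
      refine Finset.sum_congr rfl fun i _ => ?_
      rw [hTi i]; ring
    rw [this, Finset.sum_add_distrib, ← Finset.mul_sum, ← hcdef, ← hKdef]
  rw [h1, h2]
  have key : 2 * α + α ^ 2 * K + (1 + α * K) ^ 2 = 0 := by
    rw [hα]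
    field_simp
    ring_nf
    linear_combination (-1) * hs
  linear_combination c ^ 2 * key
end
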